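/- Let H₀ ≥ γ be self-adjoint on L²(X,m), V₊ : X → [0,∞] measurable, and V₋ : X → [0,∞) measurable with V₋ form small with respect to H₀ + V₊ with constants q < 1 and C_q (i.e., ∫V₋|u|² ≤ q·((h₀+V₊)[u]) + C_q‖u‖²). Let H = H₀ + V₊ − V₋ be defined via KLMN. If for some s ∈ ℝ the multiplication operator 𝟙_{{V₊ < s}} is (H₀+V₊)-relatively compact, then σ_ess(H) ⊂ [(1−q)(γ+s) − C_q, ∞). -/

import Mathlib

open MeasureTheory Set Filter Topology

noncomputable section

/-- The bounded Borel functional calculus of a self-adjoint operator on a complex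
Hilbert space `ℋ`, encoded axiomatically: a star-algebra homomorphism from bounded
Borel functions on `ℝ` (only their values on the spectrum matter) into the bounded
operators, with the sup-norm bound and strong σ-continuity. This data is equivalent
to the projection-valued spectral measure of a self-adjoint operator with the given
spectrum. -/
structure SelfAdjointCalculus (ℋ : Type) [NormedAddCommGroup ℋ]
    [InnerProductSpace ℂ ℋ] [CompleteSpace ℋ] where
  spectrum : Set ℝ
  spectrum_nonempty : spectrum.Nonempty
  spectrum_closed : IsClosed spectrum
  fc : (ℝ → ℂ) → (ℋ →L[ℂ] ℋ)
  fc_one : fc (fun _ => 1) = ContinuousLinearMap.id ℂ ℋ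
  fc_add : ∀ f g, fc (f + g) = fc f + fc g
  fc_smul : ∀ (c : ℂ) (f), fc (c • f) = c • fc f
  fc_mul : ∀ f g, fc (f * g) = (fc f).comp (fc g)
  fc_star : ∀ f, fc (fun t => starRingEnd ℂ (f t)) = ContinuousLinearMap.adjoint (fc f)
  fc_norm : ∀ (f) (C : ℝ), (∀ t ∈ spectrum, ‖f t‖ ≤ C) → ‖fc f‖ ≤ C
  fc_eqOn : ∀ f g, Set.EqOn f g spectrum → fc f = fc g
  fc_tendsto : ∀ (f : ℕ → ℝ → ℂ) (g : ℝ → ℂ) (C : ℝ),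
    (∀ n t, ‖f n t‖ ≤ C) →
    (∀ t ∈ spectrum, Filter.Tendsto (fun n => f n t) Filter.atTop (nhds (g t))) →
    ∀ x : ℋ, Filter.Tendsto (fun n => fc (f n) x) Filter.atTop (nhds (fc g x))
  fc_proj_infinite : ∀ l ∈ spectrum, ∀ ε > 0,
    fc (Set.indicator {t | dist t l < ε} (fun _ => 1)) ≠ 0

namespace SelfAdjointCalculus

variable {ℋ : Type} [NormedAddCommGroup ℋ] [InnerProductSpace ℂ ℋ] [CompleteSpace ℋ]

/-- The spectral projection `𝟙_I(H)`. -/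
def proj (Φ : SelfAdjointCalculus ℋ) (I : Set ℝ) : ℋ →L[ℂ] ℋ :=
  Φ.fc (I.indicator (fun _ => 1))

/-- `B` is `H`-relatively compact: `B ∘ 𝟙_I(H)` is compact for every bounded Borel set
`I ⊆ ℝ`. -/
def RelCompactWrt (B : ℋ →L[ℂ] ℋ) (Φ : SelfAdjointCalculus ℋ) : Prop :=
  ∀ I : Set ℝ, MeasurableSet I → Bornology.IsBounded I →
    IsCompactOperator (B.comp (Φ.proj I))

/-- The semigroup `e^{-tH}` given by the functional calculus. -/
def heat (Φ : SelfAdjointCalculus ℋ) (t : ℝ) : ℋ →L[ℂ] ℋ :=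
  Φ.fc (fun x => Complex.exp (-(t * x)))

/-- The resolvent `(H - λ)⁻¹` given by the functional calculus. -/
def resolvent (Φ : SelfAdjointCalculus ℋ) (l : ℂ) : ℋ →L[ℂ] ℋ :=
  Φ.fc (fun t => ((t : ℂ) - l)⁻¹)

/-- The resolvent set of the self-adjoint operator: complex numbers away from the
(real) spectrum. -/
def resolventSet (Φ : SelfAdjointCalculus ℋ) : Set ℂ :=
  {l : ℂ | ∀ t ∈ Φ.spectrum, (t : ℂ) ≠ l}

/-- Truncated quadratic form `(min(H,n) u | u)`, an approximation of `h[u]`. -/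
def formApprox (Φ : SelfAdjointCalculus ℋ) (n : ℕ) (u : ℋ) : ℝ :=
  (inner ℂ (Φ.fc (fun t => ((min t (n : ℝ) : ℝ) : ℂ)) u) u : ℂ).re

/-- `u` belongs to the form domain `Q(H)` of a semibounded operator: the truncated
quadratic forms stay bounded. -/
def InFormDomain (Φ : SelfAdjointCalculus ℋ) (u : ℋ) : Prop :=
  BddAbove (Set.range fun n => Φ.formApprox n u)

/-- The quadratic form `h[u] = (Hu|u)` (extended to the form domain). -/
def quadForm (Φ : SelfAdjointCalculus ℋ) (u : ℋ) : ℝ :=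
  ⨆ n, Φ.formApprox n u

/-- The essential spectrum: points around which every spectral projection has
infinite-dimensional range. -/
def essSpectrum (Φ : SelfAdjointCalculus ℋ) : Set ℝ :=
  {l : ℝ | ∀ ε > 0, ¬ FiniteDimensional ℂ
    (LinearMap.range ((Φ.proj (Set.Ioo (l - ε) (l + ε))) : ℋ →ₗ[ℂ] ℋ))}

end SelfAdjointCalculus

open ENNReal

/-- Multiplication by the indicator function of a measurable set `E`, as a bounded
operator on `L²(X, μ)`. -/
def indicatorCLM {X : Type} [MeasurableSpace X] (μ : Measure X) (E : Set X)
    (hE : MeasurableSet E) : Lp ℂ 2 μ →L[ℂ] Lp ℂ 2 μ :=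
  LinearMap.mkContinuous
    { toFun := fun u => (MemLp.indicator hE (Lp.memLp u)).toLp (E.indicator u)
      map_add' := fun u v => by
        apply Lp.ext
        filter_upwards [MemLp.coeFn_toLp (E := ℂ) (MemLp.indicator hE (Lp.memLp (u + v))),
          MemLp.coeFn_toLp (E := ℂ) (MemLp.indicator hE (Lp.memLp u)),
          MemLp.coeFn_toLp (E := ℂ) (MemLp.indicator hE (Lp.memLp v)),
          Lp.coeFn_add ((MemLp.indicator hE (Lp.memLp u)).toLp _)
            ((MemLp.indicator hE (Lp.memLp v)).toLp _),
          Lp.coeFn_add u v] with x hx1 hx2 hx3 hx4 hx5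
        rw [hx4, hx1, Pi.add_apply, hx2, hx3]
        simp only [Set.indicator]
        split_ifs with h
        · exact hx5
        · simp
      map_smul' := fun c u => by
        apply Lp.ext
        filter_upwards [MemLp.coeFn_toLp (E := ℂ) (MemLp.indicator hE (Lp.memLp (c • u))),
          MemLp.coeFn_toLp (E := ℂ) (MemLp.indicator hE (Lp.memLp u)),
          Lp.coeFn_smul c ((MemLp.indicator hE (Lp.memLp u)).toLp _),
          Lp.coeFn_smul c u] with x hx1 hx2 hx3 hx4
        simp only [RingHom.id_apply]
        rw [hx3, hx1, Pi.smul_apply, hx2]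
        simp only [Set.indicator]
        split_ifs with h
        · exact hx4
        · simp }
    1
    (fun u => by
      simp only [LinearMap.coe_mk, AddHom.coe_mk, one_mul]
      rw [Lp.norm_toLp, Lp.norm_def]
      exact ENNReal.toReal_mono (Lp.eLpNorm_ne_top u) (eLpNorm_indicator_le (ε := ℂ) _))

/-- A Hilbert–Schmidt operator: `∑ ‖T e_i‖² < ∞` for (every) Hilbert basis. -/
def IsHilbertSchmidt {ℋ : Type} [NormedAddCommGroup ℋ] [InnerProductSpace ℂ ℋ]
    [CompleteSpace ℋ] (T : ℋ →L[ℂ] ℋ) : Prop :=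
  ∀ (ι : Type) (b : HilbertBasis ι ℂ ℋ), Summable (fun i => ‖T (b i)‖ ^ 2)

namespace SelfAdjointCalculus

variable {ℋ : Type} [NormedAddCommGroup ℋ] [InnerProductSpace ℂ ℋ] [CompleteSpace ℋ]

omit [CompleteSpace ℋ] in
lemma re_inner_self_nonneg (w : ℋ) : 0 ≤ (inner ℂ w w : ℂ).re := by
  have := inner_self_nonneg (𝕜 := ℂ) (x := w); simpa using this

lemma inner_selfAdjoint_sq (B : ℋ →L[ℂ] ℋ) (hB : ContinuousLinearMap.adjoint B = B) (u : ℋ) :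
    (inner ℂ (B (B u)) u : ℂ) = inner ℂ (B u) (B u) := by
  have h := ContinuousLinearMap.adjoint_inner_left B u (B u)
  rw [hB] at h
  exact h

variable (Φ : SelfAdjointCalculus ℋ)

lemma fc_sub (f g : ℝ → ℂ) : Φ.fc (f - g) = Φ.fc f - Φ.fc g := by
  have h : f - g = f + (-1 : ℂ) • g := by funext t; simp [sub_eq_add_neg]
  rw [h, Φ.fc_add, Φ.fc_smul]
  simp [sub_eq_add_neg]

lemma fc_real_selfAdjoint (f : ℝ → ℝ) :
    ContinuousLinearMap.adjoint (Φ.fc fun t => (f t : ℂ)) = Φ.fc fun t => (f t : ℂ) := by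
  rw [← Φ.fc_star]
  congr 1
  funext t
  exact Complex.conj_ofReal _

lemma fc_nonneg (f : ℝ → ℝ) (hf : ∀ t ∈ Φ.spectrum, 0 ≤ f t) (u : ℋ) :
    0 ≤ (inner ℂ (Φ.fc (fun t => (f t : ℂ)) u) u : ℂ).re := by
  have heq : Φ.fc (fun t => (f t : ℂ)) =
      Φ.fc ((fun t => ((Real.sqrt (f t) : ℝ) : ℂ)) * (fun t => ((Real.sqrt (f t) : ℝ) : ℂ))) := by
    apply Φ.fc_eqOn
    intro t ht
    simp only [Pi.mul_apply, ← Complex.ofReal_mul, Real.mul_self_sqrt (hf t ht)]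
  rw [heq, Φ.fc_mul, ContinuousLinearMap.comp_apply,
    inner_selfAdjoint_sq _ (Φ.fc_real_selfAdjoint fun t => Real.sqrt (f t))]
  exact re_inner_self_nonneg _

lemma fc_mono (f g : ℝ → ℝ) (hfg : ∀ t ∈ Φ.spectrum, f t ≤ g t) (u : ℋ) :
    (inner ℂ (Φ.fc (fun t => (f t : ℂ)) u) u : ℂ).re ≤
      (inner ℂ (Φ.fc (fun t => (g t : ℂ)) u) u : ℂ).re := by
  have h := Φ.fc_nonneg (fun t => g t - f t) (fun t ht => sub_nonneg.2 (hfg t ht)) u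
  have heq : (fun t : ℝ => ((g t - f t : ℝ) : ℂ)) =
      (fun t => (g t : ℂ)) - fun t => (f t : ℂ) := by
    funext t; simp only [Pi.sub_apply]; push_cast; ring
  rw [heq, Φ.fc_sub] at h
  simp only [ContinuousLinearMap.sub_apply, inner_sub_left, Complex.sub_re] at h
  linarith

lemma inner_fc_const (c : ℝ) (u : ℋ) :
    (inner ℂ (Φ.fc (fun _ => (c : ℂ)) u) u : ℂ).re = c * ‖u‖ ^ 2 := by
  have h : (fun _ : ℝ => (c : ℂ)) = (c : ℂ) • (fun _ => (1 : ℂ)) := by funext t; simp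
  rw [h, Φ.fc_smul, Φ.fc_one]
  simp only [ContinuousLinearMap.smul_apply, ContinuousLinearMap.id_apply, inner_smul_left,
    Complex.conj_ofReal, inner_self_eq_norm_sq_to_K, Complex.mul_re]
  simp [← Complex.ofReal_pow]

end SelfAdjointCalculus

namespace SelfAdjointCalculus

variable {ℋ : Type} [NormedAddCommGroup ℋ] [InnerProductSpace ℂ ℋ] [CompleteSpace ℋ]
variable (Φ : SelfAdjointCalculus ℋ)

omit [CompleteSpace ℋ] in
lemma coe_ind_real (I : Set ℝ) (t : ℝ) :
    ((I.indicator (fun _ => (1 : ℝ)) t : ℝ) : ℂ) = I.indicator (fun _ => (1 : ℂ)) t := by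
  by_cases h : t ∈ I <;> simp [Set.indicator, h]

lemma proj_idem (I : Set ℝ) (u : ℋ) : Φ.proj I (Φ.proj I u) = Φ.proj I u := by
  have h1 : (I.indicator fun _ => (1:ℂ)) * (I.indicator fun _ => (1:ℂ))
      = I.indicator fun _ => (1:ℂ) := by
    funext t; by_cases h : t ∈ I <;> simp [Set.indicator, h]
  have h2 := Φ.fc_mul (I.indicator fun _ => (1:ℂ)) (I.indicator fun _ => (1:ℂ))
  rw [h1] at h2
  have h3 := congrArg (fun T : ℋ →L[ℂ] ℋ => T u) h2
  simpa [SelfAdjointCalculus.proj] using h3.symm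

lemma proj_adjoint (I : Set ℝ) : ContinuousLinearMap.adjoint (Φ.proj I) = Φ.proj I := by
  have h : (Φ.proj I) = Φ.fc fun t => ((I.indicator (fun _ => (1:ℝ)) t : ℝ) : ℂ) := by
    unfold SelfAdjointCalculus.proj
    congr 1
    funext t
    exact (coe_ind_real I t).symm
  rw [h]
  exact Φ.fc_real_selfAdjoint _

lemma re_inner_proj (I : Set ℝ) (u : ℋ) :
    (inner ℂ (Φ.proj I u) u : ℂ).re = ‖Φ.proj I u‖ ^ 2 := by
  have h1 : (inner ℂ (Φ.proj I u) u : ℂ) = inner ℂ (Φ.proj I u) (Φ.proj I u) := by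
    conv_lhs => rw [← Φ.proj_idem I u]
    exact inner_selfAdjoint_sq _ (Φ.proj_adjoint I) u
  rw [h1]
  have := inner_self_eq_norm_sq (𝕜 := ℂ) (Φ.proj I u)
  simpa using this

lemma formApprox_eq_of_fixed (I : Set ℝ) (u : ℋ) (hu : Φ.proj I u = u) (n : ℕ) :
    Φ.formApprox n u =
      (inner ℂ (Φ.fc (fun t => ((min t n * I.indicator (fun _ => 1) t : ℝ) : ℂ)) u) u : ℂ).re := by
  unfold SelfAdjointCalculus.formApprox
  conv_lhs => rw [← hu]
  congr 2
  have h2 : Φ.fc (fun t => ((min t (n:ℝ) : ℝ) : ℂ)) ∘L Φ.proj I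
      = Φ.fc fun t => ((min t n * I.indicator (fun _ => 1) t : ℝ) : ℂ) := by
    unfold SelfAdjointCalculus.proj
    rw [← Φ.fc_mul]
    congr 1
    funext t
    simp only [Pi.mul_apply]
    push_cast
    rw [coe_ind_real]
  have h3 := congrArg (fun T : ℋ →L[ℂ] ℋ => T u) h2
  simpa using h3

lemma inner_fc_const_mul_ind (I : Set ℝ) (c : ℝ) (u : ℋ) (hu : Φ.proj I u = u) :
    (inner ℂ (Φ.fc (fun t => ((c * I.indicator (fun _ => 1) t : ℝ) : ℂ)) u) u : ℂ).re
      = c * ‖u‖ ^ 2 := by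
  have h1 : (fun t => ((c * I.indicator (fun _ => 1) t : ℝ) : ℂ))
      = (c : ℂ) • (I.indicator fun _ => (1:ℂ)) := by
    funext t
    simp only [Pi.smul_apply, smul_eq_mul]
    push_cast
    rw [coe_ind_real]
  rw [h1, Φ.fc_smul]
  have h2 : Φ.fc (I.indicator fun _ => (1:ℂ)) u = u := hu
  simp only [ContinuousLinearMap.smul_apply, h2, inner_smul_left, Complex.conj_ofReal,
    inner_self_eq_norm_sq_to_K, Complex.mul_re]
  simp [← Complex.ofReal_pow]

lemma quadForm_bounds_of_fixed (I : Set ℝ) (a b : ℝ)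
    (hab : ∀ t ∈ I, t ∈ Φ.spectrum → a ≤ t ∧ t ≤ b) (u : ℋ) (hu : Φ.proj I u = u) :
    Φ.InFormDomain u ∧ a * ‖u‖ ^ 2 ≤ Φ.quadForm u ∧ Φ.quadForm u ≤ b * ‖u‖ ^ 2 := by
  have hup : ∀ n : ℕ, Φ.formApprox n u ≤ b * ‖u‖ ^ 2 := by
    intro n
    rw [Φ.formApprox_eq_of_fixed I u hu n]
    rw [← Φ.inner_fc_const_mul_ind I b u hu]
    apply Φ.fc_mono
    intro t ht
    by_cases h : t ∈ I
    · simp only [Set.indicator_of_mem h, mul_one]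
      exact (min_le_left _ _).trans (hab t h ht).2
    · simp [Set.indicator_of_notMem h]
  have hdom : Φ.InFormDomain u := ⟨b * ‖u‖ ^ 2, by rintro x ⟨n, rfl⟩; exact hup n⟩
  refine ⟨hdom, ?_, ciSup_le hup⟩
  obtain ⟨n₀, hn₀⟩ := exists_nat_ge a
  have hlow : a * ‖u‖ ^ 2 ≤ Φ.formApprox n₀ u := by
    rw [Φ.formApprox_eq_of_fixed I u hu n₀]
    rw [← Φ.inner_fc_const_mul_ind I a u hu]
    apply Φ.fc_mono
    intro t ht
    by_cases h : t ∈ I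
    · simp only [Set.indicator_of_mem h, mul_one]
      exact le_min (hab t h ht).1 hn₀
    · simp [Set.indicator_of_notMem h]
  exact hlow.trans (le_ciSup hdom n₀)

lemma quadForm_ge_const (γ : ℝ) (hγ : Φ.spectrum ⊆ Set.Ici γ) (u : ℋ)
    (hu : Φ.InFormDomain u) : γ * ‖u‖ ^ 2 ≤ Φ.quadForm u := by
  obtain ⟨n₀, hn₀⟩ := exists_nat_ge γ
  have h1 : γ * ‖u‖ ^ 2 ≤ Φ.formApprox n₀ u := by
    unfold SelfAdjointCalculus.formApprox
    rw [← Φ.inner_fc_const γ u]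
    apply Φ.fc_mono
    intro t ht
    exact le_min (hγ ht) hn₀
  exact h1.trans (le_ciSup hu n₀)

lemma cheb (γ : ℝ) (hγ : Φ.spectrum ⊆ Set.Ici γ) (n : ℝ) (hn : γ ≤ n) (u : ℋ)
    (hu : Φ.InFormDomain u) :
    γ * ‖u‖ ^ 2 + (n - γ) * ‖Φ.proj (Set.Ici n) u‖ ^ 2 ≤ Φ.quadForm u := by
  obtain ⟨m, hm⟩ := exists_nat_ge n
  have key : γ * ‖u‖ ^ 2 + (n - γ) * ‖Φ.proj (Set.Ici n) u‖ ^ 2 ≤ Φ.formApprox m u := by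
    have h1 : (fun t => ((γ + (n - γ) * (Set.Ici n).indicator (fun _ => 1) t : ℝ) : ℂ))
        = (fun _ => (γ:ℂ)) + ((n - γ : ℝ) : ℂ) • ((Set.Ici n).indicator fun _ => (1:ℂ)) := by
      funext t
      simp only [Pi.add_apply, Pi.smul_apply, smul_eq_mul]
      push_cast
      rw [coe_ind_real]
    have h2 : (inner ℂ (Φ.fc (fun t => ((γ + (n - γ) * (Set.Ici n).indicator (fun _ => 1) t : ℝ) : ℂ)) u) u : ℂ).re
        = γ * ‖u‖ ^ 2 + (n - γ) * ‖Φ.proj (Set.Ici n) u‖ ^ 2 := by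
      rw [h1, Φ.fc_add, Φ.fc_smul]
      simp only [ContinuousLinearMap.add_apply, ContinuousLinearMap.smul_apply, inner_add_left,
        inner_smul_left, Complex.conj_ofReal, Complex.add_re]
      rw [Φ.inner_fc_const γ u]
      have h4 : (Φ.fc ((Set.Ici n).indicator fun _ => (1:ℂ))) = Φ.proj (Set.Ici n) := rfl
      rw [h4]
      congr 1
      rw [← Φ.re_inner_proj (Set.Ici n) u]
      simp [Complex.mul_re]
    rw [← h2]
    unfold SelfAdjointCalculus.formApprox
    apply Φ.fc_mono
    intro t ht
    have htγ : γ ≤ t := hγ ht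
    by_cases h : n ≤ t
    · simp only [Set.indicator_of_mem (Set.mem_Ici.2 h), mul_one]
      have : γ + (n - γ) = n := by ring
      rw [this]
      exact le_min h hm
    · push_neg at h
      simp only [Set.indicator_of_notMem (by simpa using not_le.2 h : t ∉ Set.Ici n), mul_zero,
        add_zero]
      exact le_min htγ (hn.trans hm)
  exact key.trans (le_ciSup hu m)

lemma proj_partition (γ : ℝ) (hγ : Φ.spectrum ⊆ Set.Ici γ) (n : ℝ) (hn : γ ≤ n) (u : ℋ) :
    Φ.proj (Set.Ico γ n) u + Φ.proj (Set.Ici n) u = u := by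
  have h1 : Φ.fc ((Set.Ico γ n).indicator (fun _ => (1:ℂ)) + (Set.Ici n).indicator fun _ => (1:ℂ))
      = Φ.fc fun _ => (1:ℂ) := by
    apply Φ.fc_eqOn
    intro t ht
    have htγ : γ ≤ t := hγ ht
    simp only [Pi.add_apply]
    by_cases h : t < n
    · rw [Set.indicator_of_mem (Set.mem_Ico.2 ⟨htγ, h⟩), Set.indicator_of_notMem (by simpa using not_le.2 h)]
      simp
    · push_neg at h
      rw [Set.indicator_of_notMem (fun hc => absurd hc.2 (not_lt.2 h)),
        Set.indicator_of_mem (Set.mem_Ici.2 h)]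
      simp
  rw [Φ.fc_add, Φ.fc_one] at h1
  have h3 := congrArg (fun T : ℋ →L[ℂ] ℋ => T u) h1
  simpa [SelfAdjointCalculus.proj] using h3

lemma mem_range_proj_iff (I : Set ℝ) (u : ℋ) :
    u ∈ LinearMap.range ((Φ.proj I : ℋ →ₗ[ℂ] ℋ)) ↔ Φ.proj I u = u := by
  rw [LinearMap.mem_range]
  constructor
  · rintro ⟨v, rfl⟩
    simpa using Φ.proj_idem I v
  · intro h
    exact ⟨u, by simpa using h⟩

lemma isClosed_range_proj (I : Set ℝ) :
    IsClosed ((LinearMap.range ((Φ.proj I : ℋ →ₗ[ℂ] ℋ)) : Submodule ℂ ℋ) : Set ℋ) := by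
  have h : ((LinearMap.range ((Φ.proj I : ℋ →ₗ[ℂ] ℋ)) : Submodule ℂ ℋ) : Set ℋ)
      = (fun x => Φ.proj I x - x) ⁻¹' {0} := by
    ext x
    simp only [SetLike.mem_coe, Set.mem_preimage, Set.mem_singleton_iff, sub_eq_zero]
    rw [Φ.mem_range_proj_iff]
  rw [h]
  exact IsClosed.preimage ((Φ.proj I).continuous.sub continuous_id) isClosed_singleton

end SelfAdjointCalculus

section Aux

variable {ℋ : Type} [NormedAddCommGroup ℋ] [InnerProductSpace ℂ ℋ] [CompleteSpace ℋ]

lemma exists_orthonormal_seq (R : Submodule ℂ ℋ) (hR : IsClosed (R : Set ℋ))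
    (hinf : ¬ FiniteDimensional ℂ R) :
    ∃ u : ℕ → ℋ, Orthonormal ℂ u ∧ ∀ k, u k ∈ R := by
  haveI : CompleteSpace R := hR.completeSpace_coe
  obtain ⟨w, b, hb⟩ := exists_hilbertBasis ℂ R
  have hwinf : w.Infinite := by
    by_contra hfin
    rw [Set.not_infinite] at hfin
    apply hinf
    have hdense : Dense ((Submodule.span ℂ w : Submodule ℂ R) : Set R) := by
      have h := b.dense_span
      rw [hb, Subtype.range_coe] at h
      rwa [Submodule.dense_iff_topologicalClosure_eq_top]
    haveI hfd : FiniteDimensional ℂ (Submodule.span ℂ w : Submodule ℂ R) :=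
      FiniteDimensional.span_of_finite ℂ hfin
    have hclosed : IsClosed ((Submodule.span ℂ w : Submodule ℂ R) : Set R) :=
      Submodule.closed_of_finiteDimensional _
    have htop : (Submodule.span ℂ w : Submodule ℂ R) = ⊤ := by
      apply Submodule.eq_top_iff'.2
      intro x
      have : (Submodule.span ℂ w : Set R) = Set.univ := by
        rw [← hclosed.closure_eq, hdense.closure_eq]
      rw [← SetLike.mem_coe, this]
      trivial
    exact ⟨⟨hfin.toFinset, by rw [Set.Finite.coe_toFinset]; exact htop⟩⟩
  let e := hwinf.natEmbedding
  refine ⟨fun k => ((b (e k) : R) : ℋ), ?_, fun k => (b (e k) : R).2⟩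
  have hON : Orthonormal ℂ b := b.orthonormal
  have hON2 : Orthonormal ℂ fun k => b (e k) := hON.comp e e.injective
  constructor
  · intro k
    have h := hON2.1 k
    show ‖((b (e k) : R) : ℋ)‖ = 1
    rw [← h]
    rfl
  · intro i j hij
    have h := hON2.2 hij
    show (inner ℂ ((b (e i) : R) : ℋ) ((b (e j) : R) : ℋ) : ℂ) = 0
    rw [← h]
    rfl

lemma orthonormal_weak_null (u : ℕ → ℋ) (hu : Orthonormal ℂ u) (x : ℋ) :
    Filter.Tendsto (fun k => (inner ℂ (u k) x : ℂ)) Filter.atTop (nhds 0) := by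
  have hsum : Summable fun k => ‖(inner ℂ (u k) x : ℂ)‖ ^ 2 := hu.inner_products_summable x
  have h1 : Filter.Tendsto (fun k => ‖(inner ℂ (u k) x : ℂ)‖ ^ 2) Filter.atTop (nhds 0) :=
    hsum.tendsto_atTop_zero
  rw [tendsto_zero_iff_norm_tendsto_zero]
  have h2 : Filter.Tendsto (fun k => Real.sqrt (‖(inner ℂ (u k) x : ℂ)‖ ^ 2))
      Filter.atTop (nhds (Real.sqrt 0)) := (Real.continuous_sqrt.tendsto 0).comp h1
  simpa [Real.sqrt_sq (norm_nonneg _)] using h2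

lemma compact_not_bddBelow_on_orthonormal (K : ℋ →L[ℂ] ℋ) (hK : IsCompactOperator K)
    (u : ℕ → ℋ) (hu : Orthonormal ℂ u) (c : ℝ) (hc : 0 < c) (hlow : ∀ k, c ≤ ‖K (u k)‖) :
    False := by
  obtain ⟨C, hCcomp, hCnhds⟩ := hK
  obtain ⟨r, hr, hball⟩ := Metric.mem_nhds_iff.1 hCnhds
  set y : ℕ → ℋ := fun k => K (((r / 2 : ℝ) : ℂ) • u k) with hy
  have hyC : ∀ k, y k ∈ C := by
    intro k
    apply hball
    rw [Metric.mem_ball, dist_zero_right, norm_smul, hu.1 k]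
    simp only [Complex.norm_real, mul_one, Real.norm_eq_abs]
    rw [abs_of_pos (by linarith)]
    linarith
  obtain ⟨a, haC, φ, hφ, hconv⟩ := hCcomp.isSeqCompact hyC
  have ha0 : a = 0 := by
    have hinner : Filter.Tendsto (fun i => (inner ℂ (y (φ i)) a : ℂ)) Filter.atTop
        (nhds (inner ℂ a a : ℂ)) := by
      have : Filter.Tendsto (fun i => y (φ i)) Filter.atTop (nhds a) := hconv
      exact Filter.Tendsto.inner this tendsto_const_nhds
    have hzero : Filter.Tendsto (fun i => (inner ℂ (y (φ i)) a : ℂ)) Filter.atTop (nhds 0) := by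
      have heq : ∀ k, (inner ℂ (y k) a : ℂ)
          = ((r / 2 : ℝ) : ℂ) * inner ℂ (u k) (ContinuousLinearMap.adjoint K a) := by
        intro k
        show (inner ℂ (K (((r / 2 : ℝ) : ℂ) • u k)) a : ℂ) = _
        rw [K.map_smul, inner_smul_left, Complex.conj_ofReal,
          ContinuousLinearMap.adjoint_inner_right]
      simp only [heq]
      have := (orthonormal_weak_null u hu (ContinuousLinearMap.adjoint K a)).comp
        hφ.tendsto_atTop
      simpa using (this.const_mul (((r / 2 : ℝ) : ℂ)))
    have := tendsto_nhds_unique hinner hzero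
    exact inner_self_eq_zero.1 this
  have hnorm : Filter.Tendsto (fun i => ‖y (φ i)‖) Filter.atTop (nhds 0) := by
    rw [ha0] at hconv
    simpa using hconv.norm
  have hlow2 : ∀ i, r / 2 * c ≤ ‖y (φ i)‖ := by
    intro i
    have hyn : ‖y (φ i)‖ = r / 2 * ‖K (u (φ i))‖ := by
      show ‖K (((r / 2 : ℝ) : ℂ) • u (φ i))‖ = _
      rw [K.map_smul, norm_smul, Complex.norm_real, Real.norm_eq_abs,
        abs_of_pos (by linarith : (0:ℝ) < r / 2)]
    rw [hyn]
    exact mul_le_mul_of_nonneg_left (hlow (φ i)) (by linarith)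
  have := le_of_tendsto_of_tendsto' tendsto_const_nhds hnorm hlow2
  nlinarith
end Aux

section LpAux

variable {X : Type} [MeasurableSpace X] {μ : MeasureTheory.Measure X}

lemma Lp_sq_ne_top (v : Lp ℂ 2 μ) : ∫⁻ x, (‖v x‖₊ : ℝ≥0∞) ^ 2 ∂μ ≠ ∞ := by
  have h := Lp.eLpNorm_ne_top v
  rw [eLpNorm_eq_lintegral_rpow_enorm_toReal (by norm_num) (by norm_num)] at h
  simp only [enorm_eq_nnnorm] at h
  intro hc
  apply h
  have : (2 : ℝ≥0∞).toReal = (2 : ℝ) := by norm_num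
  rw [this]
  have h2 : ∫⁻ x, (‖v x‖₊ : ℝ≥0∞) ^ (2 : ℝ) ∂μ = ∞ := by
    rw [← hc]
    congr 1
    funext x
    rw [← ENNReal.rpow_natCast]
    norm_num
  rw [h2]
  simp

lemma Lp_norm_sq_eq (v : Lp ℂ 2 μ) :
    ‖v‖ ^ 2 = (∫⁻ x, (‖v x‖₊ : ℝ≥0∞) ^ 2 ∂μ).toReal := by
  have h : ‖v‖ = (eLpNorm v 2 μ).toReal := rfl
  rw [h, eLpNorm_eq_lintegral_rpow_enorm_toReal (by norm_num) (by norm_num)]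
  simp only [enorm_eq_nnnorm]
  have h2 : (2 : ℝ≥0∞).toReal = (2 : ℝ) := by norm_num
  rw [h2]
  have h3 : ∫⁻ x, (‖v x‖₊ : ℝ≥0∞) ^ (2 : ℝ) ∂μ = ∫⁻ x, (‖v x‖₊ : ℝ≥0∞) ^ 2 ∂μ := by
    congr 1
    funext x
    rw [← ENNReal.rpow_natCast]
    norm_num
  rw [h3]
  rw [← Real.rpow_natCast _ 2, ENNReal.toReal_rpow, ← ENNReal.rpow_mul]
  norm_num

end LpAux

section IndAux

variable {X : Type} [MeasurableSpace X] {μ : MeasureTheory.Measure X}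

lemma indicatorCLM_coeFn (E : Set X) (hE : MeasurableSet E) (v : Lp ℂ 2 μ) :
    (indicatorCLM μ E hE v : Lp ℂ 2 μ) =ᵐ[μ] E.indicator v :=
  MeasureTheory.MemLp.coeFn_toLp (E := ℂ) (MemLp.indicator hE (MeasureTheory.Lp.memLp v))

lemma indicatorCLM_norm_le (E : Set X) (hE : MeasurableSet E) (v : Lp ℂ 2 μ) :
    ‖indicatorCLM μ E hE v‖ ≤ ‖v‖ := by
  have h : ‖indicatorCLM μ E hE‖ ≤ 1 := LinearMap.mkContinuous_norm_le _ zero_le_one _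
  calc ‖indicatorCLM μ E hE v‖ ≤ ‖indicatorCLM μ E hE‖ * ‖v‖ :=
        (indicatorCLM μ E hE).le_opNorm v
    _ ≤ 1 * ‖v‖ := mul_le_mul_of_nonneg_right h (norm_nonneg v)
    _ = ‖v‖ := one_mul _

lemma indicatorCLM_diff_sq (E : Set X) (hE : MeasurableSet E) (v : Lp ℂ 2 μ) :
    ∫⁻ x, (‖(v - indicatorCLM μ E hE v) x‖₊ : ℝ≥0∞) ^ 2 ∂μ
      = ∫⁻ x in Eᶜ, (‖v x‖₊ : ℝ≥0∞) ^ 2 ∂μ := by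
  have h1 : (v - indicatorCLM μ E hE v : Lp ℂ 2 μ) =ᵐ[μ] fun x => Eᶜ.indicator v x := by
    filter_upwards [Lp.coeFn_sub v (indicatorCLM μ E hE v), indicatorCLM_coeFn E hE v]
      with x hx1 hx2
    rw [hx1, Pi.sub_apply, hx2]
    by_cases h : x ∈ E
    · rw [Set.indicator_of_mem h, Set.indicator_of_notMem (by simp [h] : x ∉ Eᶜ)]
      simp
    · rw [Set.indicator_of_notMem h, Set.indicator_of_mem (by simp [h] : x ∈ Eᶜ)]
      simp
  calc ∫⁻ x, (‖(v - indicatorCLM μ E hE v) x‖₊ : ℝ≥0∞) ^ 2 ∂μ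
      = ∫⁻ x, (‖Eᶜ.indicator v x‖₊ : ℝ≥0∞) ^ 2 ∂μ :=
        MeasureTheory.lintegral_congr_ae (h1.mono fun x hx => by simp only [hx])
    _ = ∫⁻ x, Eᶜ.indicator (fun y => (‖v y‖₊ : ℝ≥0∞) ^ 2) x ∂μ := by
        congr 1
        funext x
        by_cases h : x ∈ Eᶜ
        · rw [Set.indicator_of_mem h, Set.indicator_of_mem h]
        · rw [Set.indicator_of_notMem h, Set.indicator_of_notMem h]
          simp
    _ = ∫⁻ x in Eᶜ, (‖v x‖₊ : ℝ≥0∞) ^ 2 ∂μ := MeasureTheory.lintegral_indicator hE.compl _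

end IndAux

/-- Let `H₀ ≥ γ` be self-adjoint on `L²(X, μ)` (calculus `Φ₀`), `V₊` a
nonnegative (possibly `∞`-valued) measurable potential, `ΦP` the calculus of the form
sum `H₀ + V₊`, `V₋ ≥ 0` form small w.r.t. `H₀ + V₊` with constants `q < 1`, `C_q`, and
`Φ` the calculus of `H = H₀ + V₊ - V₋` (KLMN). If multiplication by `𝟙_{{V₊ < s}}` is
`(H₀ + V₊)`-relatively compact for some `s`, then
`σ_ess(H) ⊆ [(1 - q)(γ + s) - C_q, ∞)`. -/
theorem stmt11 {X : Type} [MeasurableSpace X] (μ : Measure X) [SigmaFinite μ]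
    (Φ₀ ΦP Φ : SelfAdjointCalculus (Lp ℂ 2 μ))
    (γ : ℝ) (hγ : Φ₀.spectrum ⊆ Set.Ici γ)
    (Vp : X → ℝ≥0∞) (hVpmeas : Measurable Vp)
    (Vm : X → ℝ) (hVmmeas : Measurable Vm) (hVm0 : ∀ x, 0 ≤ Vm x)
    -- `ΦP` is the form sum `H₀ + V₊`:
    (hPdom : ∀ u : Lp ℂ 2 μ, ΦP.InFormDomain u ↔
      (Φ₀.InFormDomain u ∧ ∫⁻ x, Vp x * (‖u x‖₊ : ℝ≥0∞) ^ 2 ∂μ < ∞))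
    (hPform : ∀ u : Lp ℂ 2 μ, ΦP.InFormDomain u →
      ΦP.quadForm u = Φ₀.quadForm u + (∫⁻ x, Vp x * (‖u x‖₊ : ℝ≥0∞) ^ 2 ∂μ).toReal)
    -- `V₋` is form small w.r.t. `H₀ + V₊` with constants `q < 1` and `C_q`:
    (q Cq : ℝ) (hq0 : 0 ≤ q) (hq1 : q < 1)
    (hsmall : ∀ u : Lp ℂ 2 μ, ΦP.InFormDomain u →
      ∫⁻ x, ENNReal.ofReal (Vm x) * (‖u x‖₊ : ℝ≥0∞) ^ 2 ∂μ < ∞ ∧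
      (∫⁻ x, ENNReal.ofReal (Vm x) * (‖u x‖₊ : ℝ≥0∞) ^ 2 ∂μ).toReal
        ≤ q * ΦP.quadForm u + Cq * ‖u‖ ^ 2)
    -- `Φ` is `H = H₀ + V₊ - V₋`, defined via the KLMN theorem:
    (hdom : ∀ u, Φ.InFormDomain u ↔ ΦP.InFormDomain u)
    (hform : ∀ u, ΦP.InFormDomain u → Φ.quadForm u = ΦP.quadForm u -
      (∫⁻ x, ENNReal.ofReal (Vm x) * (‖u x‖₊ : ℝ≥0∞) ^ 2 ∂μ).toReal)
    (s : ℝ)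
    (hE : MeasurableSet {x | Vp x < ENNReal.ofReal s})
    (hrel : SelfAdjointCalculus.RelCompactWrt
      (indicatorCLM μ {x | Vp x < ENNReal.ofReal s} hE) ΦP) :
    Φ.essSpectrum ⊆ Set.Ici ((1 - q) * (γ + s) - Cq) := by
  intro l hl
  rw [Set.mem_Ici]
  by_contra hlt
  push_neg at hlt
  set c : ℝ := (1 - q) * (γ + s) - Cq with hc
  set ε : ℝ := (c - l) / 2 with hε
  have hε0 : 0 < ε := by rw [hε]; linarith
  have hPinf := hl ε hε0
  have hclosed := Φ.isClosed_range_proj (Set.Ioo (l - ε) (l + ε))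
  obtain ⟨u, huON, huR⟩ := exists_orthonormal_seq _ hclosed hPinf
  have hufix : ∀ k, Φ.proj (Set.Ioo (l - ε) (l + ε)) (u k) = u k :=
    fun k => (Φ.mem_range_proj_iff _ _).1 (huR k)
  have hunorm : ∀ k, ‖u k‖ = 1 := huON.1
  set b : ℝ := l + ε with hb
  have hbc : b < c := by rw [hb, hε]; linarith
  have h1q : 0 < 1 - q := by linarith
  -- quadForm Φ bounds
  have key : ∀ k, Φ.InFormDomain (u k) ∧ Φ.quadForm (u k) ≤ b := by
    intro k
    have h := Φ.quadForm_bounds_of_fixed (Set.Ioo (l - ε) (l + ε)) (l - ε) b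
      (fun t ht _ => ⟨le_of_lt ht.1, le_of_lt ht.2⟩) (u k) (hufix k)
    refine ⟨h.1, ?_⟩
    have h2 := h.2.2
    rwa [hunorm k, one_pow, mul_one] at h2
  -- ΦP spectrum lower bound
  have hγP : ΦP.spectrum ⊆ Set.Ici γ := by
    intro t0 ht0
    rw [Set.mem_Ici]
    by_contra hlt2
    push_neg at hlt2
    set ε2 : ℝ := (γ - t0) / 2 with hε2
    have hε20 : 0 < ε2 := by rw [hε2]; linarith
    have hne := ΦP.fc_proj_infinite t0 ht0 ε2 hε20
    have hvex : ∃ v, ΦP.proj {t | dist t t0 < ε2} v ≠ 0 := by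
      by_contra hv
      push_neg at hv
      exact hne (ContinuousLinearMap.ext fun v => by simpa [SelfAdjointCalculus.proj] using hv v)
    obtain ⟨v, hv⟩ := hvex
    have hwfix : ΦP.proj {t | dist t t0 < ε2} (ΦP.proj {t | dist t t0 < ε2} v)
        = ΦP.proj {t | dist t t0 < ε2} v := ΦP.proj_idem _ v
    have hbounds := ΦP.quadForm_bounds_of_fixed {t | dist t t0 < ε2} (t0 - ε2) (t0 + ε2)
      (fun t ht _ => by
        have h' : |t - t0| < ε2 := by simpa [Real.dist_eq] using ht
        have h'' := abs_lt.1 h'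
        constructor <;> linarith)
      (ΦP.proj {t | dist t t0 < ε2} v) hwfix
    set w := ΦP.proj {t | dist t t0 < ε2} v with hwdef
    obtain ⟨hwdom, hwlow, hwup⟩ := hbounds
    obtain ⟨h0dom, hfin⟩ := (hPdom w).1 hwdom
    have h0γ := Φ₀.quadForm_ge_const γ hγ w h0dom
    have hfp := hPform w hwdom
    have hw0 : (0:ℝ) < ‖w‖ := norm_pos_iff.2 hv
    have hwnorm : 0 < ‖w‖ ^ 2 := by positivity
    have hquadlow : γ * ‖w‖ ^ 2 ≤ ΦP.quadForm w := by
      rw [hfp]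
      have := ENNReal.toReal_nonneg
        (a := ∫⁻ x, Vp x * (‖w x‖₊ : ℝ≥0∞) ^ 2 ∂μ)
      linarith
    have hcontra : γ * ‖w‖ ^ 2 ≤ (t0 + ε2) * ‖w‖ ^ 2 := hquadlow.trans hwup
    have : γ ≤ t0 + ε2 := le_of_mul_le_mul_right (by linarith [hcontra]) hwnorm
    rw [hε2] at this
    linarith
  -- bound M on ΦP.quadForm
  set M : ℝ := (b + Cq) / (1 - q) with hM
  have hMlt : M < γ + s := by
    rw [hM, div_lt_iff₀ h1q]
    nlinarith [hbc]
  have hPkey : ∀ k, ΦP.InFormDomain (u k) ∧ ΦP.quadForm (u k) ≤ M := by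
    intro k
    obtain ⟨hdomk, hqk⟩ := key k
    have hPdomk : ΦP.InFormDomain (u k) := (hdom (u k)).1 hdomk
    refine ⟨hPdomk, ?_⟩
    have hf := hform (u k) hPdomk
    have hsm := (hsmall (u k) hPdomk).2
    rw [hunorm k] at hsm
    rw [hM, le_div_iff₀ h1q]
    nlinarith [hqk, hf, hsm]
  have hγPquad : ∀ k, γ ≤ ΦP.quadForm (u k) ∧
      (∫⁻ x, Vp x * (‖(u k) x‖₊ : ℝ≥0∞) ^ 2 ∂μ).toReal ≤ ΦP.quadForm (u k) - γ := by
    intro k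
    have hPdomk := (hPkey k).1
    obtain ⟨h0dom, hfin⟩ := (hPdom (u k)).1 hPdomk
    have h0γ := Φ₀.quadForm_ge_const γ hγ (u k) h0dom
    rw [hunorm k, one_pow, mul_one] at h0γ
    have hfp := hPform (u k) hPdomk
    have htr := ENNReal.toReal_nonneg
      (a := ∫⁻ x, Vp x * (‖(u k) x‖₊ : ℝ≥0∞) ^ 2 ∂μ)
    constructor
    · rw [hfp]; linarith
    · rw [hfp]; linarith
  have hγM : γ ≤ M := (hγPquad 0).1.trans (hPkey 0).2
  -- case s ≤ 0
  rcases le_or_gt s 0 with hs0 | hs0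
  · linarith [hγM, hMlt]
  -- s > 0 below
  set θ : ℝ := (M - γ) / s with hθ
  have hθ0 : 0 ≤ θ := by rw [hθ]; exact div_nonneg (by linarith [hγM]) hs0.le
  have hθ1 : θ < 1 := by rw [hθ, div_lt_one hs0]; linarith
  set ρ : ℝ := 1 - Real.sqrt θ with hρ
  have hρ0 : 0 < ρ := by
    rw [hρ]
    have : Real.sqrt θ < 1 := by
      rw [show (1:ℝ) = Real.sqrt 1 by simp]
      exact Real.sqrt_lt_sqrt hθ0 (by simpa using hθ1)
    linarith
  -- lower bound on ‖B (u k)‖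
  have hBlow : ∀ k, ρ ≤ ‖indicatorCLM μ {x | Vp x < ENNReal.ofReal s} hE (u k)‖ := by
    intro k
    have hPdomk := (hPkey k).1
    obtain ⟨h0dom, hfin⟩ := (hPdom (u k)).1 hPdomk
    set Tk := ∫⁻ x in {x | Vp x < ENNReal.ofReal s}ᶜ, (‖(u k) x‖₊ : ℝ≥0∞) ^ 2 ∂μ with hTk
    have hsT : ENNReal.ofReal s * Tk ≤ ∫⁻ x, Vp x * (‖(u k) x‖₊ : ℝ≥0∞) ^ 2 ∂μ := by
      rw [hTk, ← MeasureTheory.lintegral_const_mul' _ _ ENNReal.ofReal_ne_top]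
      calc ∫⁻ x in {x | Vp x < ENNReal.ofReal s}ᶜ,
            ENNReal.ofReal s * (‖(u k) x‖₊ : ℝ≥0∞) ^ 2 ∂μ
          ≤ ∫⁻ x in {x | Vp x < ENNReal.ofReal s}ᶜ, Vp x * (‖(u k) x‖₊ : ℝ≥0∞) ^ 2 ∂μ := by
            apply MeasureTheory.setLIntegral_mono' hE.compl
            intro x hx
            have hVx : ENNReal.ofReal s ≤ Vp x := by
              simpa [not_lt] using hx
            exact mul_le_mul_left hVx _
        _ ≤ ∫⁻ x, Vp x * (‖(u k) x‖₊ : ℝ≥0∞) ^ 2 ∂μ :=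
            MeasureTheory.setLIntegral_le_lintegral _ _
    have hTkReal : s * Tk.toReal ≤ (∫⁻ x, Vp x * (‖(u k) x‖₊ : ℝ≥0∞) ^ 2 ∂μ).toReal := by
      have h2 := ENNReal.toReal_mono hfin.ne hsT
      rwa [ENNReal.toReal_mul, ENNReal.toReal_ofReal hs0.le] at h2
    have hTkθ : Tk.toReal ≤ θ := by
      rw [hθ, le_div_iff₀ hs0]
      have h3 := (hγPquad k).2
      have h4 := (hPkey k).2
      nlinarith [hTkReal]
    -- ‖u k - B u k‖ ^ 2 = Tk.toReal
    have hdiff : ‖u k - indicatorCLM μ {x | Vp x < ENNReal.ofReal s} hE (u k)‖ ^ 2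
        = Tk.toReal := by
      rw [Lp_norm_sq_eq, indicatorCLM_diff_sq]
    have hdle : ‖u k - indicatorCLM μ {x | Vp x < ENNReal.ofReal s} hE (u k)‖
        ≤ Real.sqrt θ := by
      rw [← Real.sqrt_sq (norm_nonneg _), hdiff]
      exact Real.sqrt_le_sqrt hTkθ
    have htri := norm_sub_norm_le (u k)
      (indicatorCLM μ {x | Vp x < ENNReal.ofReal s} hE (u k))
    rw [hunorm k] at htri
    rw [hρ]
    linarith
  -- Chebyshev cutoff
  set D : ℝ := (ρ / 2) ^ 2 with hD
  have hD0 : 0 < D := by positivity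
  set n : ℝ := γ + (M - γ) / D + 1 with hn
  have hnγ : γ ≤ n := by
    rw [hn]
    have : 0 ≤ (M - γ) / D := div_nonneg (by linarith [hγM]) hD0.le
    linarith
  have hPn : ∀ k, ‖ΦP.proj (Set.Ici n) (u k)‖ < ρ / 2 := by
    intro k
    have hch := ΦP.cheb γ hγP n hnγ (u k) (hPkey k).1
    rw [hunorm k, one_pow, mul_one] at hch
    have h4 := (hPkey k).2
    -- (n - γ) * ‖Pn u‖^2 ≤ M - γ
    have h5 : (n - γ) * ‖ΦP.proj (Set.Ici n) (u k)‖ ^ 2 ≤ M - γ := by linarith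
    have hng : n - γ = (M - γ) / D + 1 := by rw [hn]; ring
    by_contra hcon
    push_neg at hcon
    have h6 : D ≤ ‖ΦP.proj (Set.Ici n) (u k)‖ ^ 2 := by
      rw [hD]
      have := norm_nonneg (ΦP.proj (Set.Ici n) (u k))
      nlinarith [hcon]
    have h7 : 0 ≤ M - γ := by linarith [hγM]
    rw [hng] at h5
    have hmulpos : 0 ≤ (M - γ) / D + 1 := by
      have := div_nonneg h7 hD0.le
      linarith
    have hx : ((M - γ) / D + 1) * D ≤ ((M - γ) / D + 1) * ‖ΦP.proj (Set.Ici n) (u k)‖ ^ 2 :=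
      mul_le_mul_of_nonneg_left h6 hmulpos
    have hy : ((M - γ) / D + 1) * D = (M - γ) + D := by
      field_simp
    linarith [hx, h5, hD0]
  -- compactness contradiction
  set K := (indicatorCLM μ {x | Vp x < ENNReal.ofReal s} hE).comp
    (ΦP.proj (Set.Ico γ n)) with hK
  have hKcomp : IsCompactOperator K :=
    hrel (Set.Ico γ n) measurableSet_Ico (Metric.isBounded_Ico γ n)
  apply compact_not_bddBelow_on_orthonormal K hKcomp u huON (ρ / 2) (by positivity)
  intro k
  have hsplit := ΦP.proj_partition γ hγP n hnγ (u k)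
  have hBsplit : indicatorCLM μ {x | Vp x < ENNReal.ofReal s} hE (u k)
      = K (u k) + indicatorCLM μ {x | Vp x < ENNReal.ofReal s} hE
          (ΦP.proj (Set.Ici n) (u k)) := by
    conv_lhs => rw [← hsplit]
    rw [map_add]
    rfl
  have htri2 : ‖indicatorCLM μ {x | Vp x < ENNReal.ofReal s} hE (u k)‖
      ≤ ‖K (u k)‖ + ‖ΦP.proj (Set.Ici n) (u k)‖ := by
    rw [hBsplit]
    refine (norm_add_le _ _).trans ?_
    gcongr
    exact indicatorCLM_norm_le _ hE _
  have h8 := hBlow k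
  have h9 := hPn k
  linarith
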